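/- Multiplex influence spread via the LEM: for every multiplex network w on n agents with m layers, every seed set S₀ ⊆ Fin n, and every protocol assignment u, the multiplex influence spread σ_{S₀} — the expected cardinality of the steady-state active set S n of the multiplex LTM over thresholds μ distributed according to the product of uniform measures on [0,1] — equals ∑_{i=1}^{n} r(i), the sum over agents of the probabilities of being U-reachable from S₀ in the multiplex LEM. In particular, taking S₀ = {j}, the multiplex cascade centrality of agent j satisfies C_j = ∑_{i=1}^{n} r(i). -/

import Mathlib

open MeasureTheory

inductive Protocol
  | OR
  | AND
deriving DecidableEq

noncomputable def ltmStep {n m : ℕ} (w : Fin m → Fin n → Fin n → ℝ)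
    (u : Fin n → Protocol) (μ : Fin n → Fin m → ℝ)
    (A : Finset (Fin n)) : Finset (Fin n) :=
  A ∪ Finset.univ.filter fun i =>
    (u i = Protocol.OR ∧ ∃ k, μ i k < ∑ j ∈ A, w k i j) ∨
    (u i = Protocol.AND ∧ ∀ k, μ i k < ∑ j ∈ A, w k i j)

noncomputable def ltmSS {n m : ℕ} (w : Fin m → Fin n → Fin n → ℝ)
    (u : Fin n → Protocol) (S₀ : Finset (Fin n))
    (μ : Fin n → Fin m → ℝ) : Finset (Fin n) :=
  (ltmStep w u μ)^[n] S₀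

noncomputable def thMeasure (n m : ℕ) : Measure (Fin n → Fin m → ℝ) :=
  Measure.pi fun _ => Measure.pi fun _ => volume.restrict (Set.Icc (0:ℝ) 1)

noncomputable def pLTM {n m : ℕ} (w : Fin m → Fin n → Fin n → ℝ)
    (u : Fin n → Protocol) (S₀ : Finset (Fin n)) (i : Fin n) : ℝ :=
  (thMeasure n m {μ | i ∈ ltmSS w u S₀ μ}).toReal

def lemStep {n m : ℕ} (S₀ : Finset (Fin n)) (u : Fin n → Protocol)
    (σ : Fin n → Fin m → Fin n) (A : Finset (Fin n)) : Finset (Fin n) :=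
  S₀ ∪ A ∪ Finset.univ.filter fun i =>
    (u i = Protocol.OR ∧ ∃ k, σ i k ∈ A) ∨
    (u i = Protocol.AND ∧ ∀ k, σ i k ∈ A)

def UReachable {n m : ℕ} (S₀ : Finset (Fin n)) (u : Fin n → Protocol)
    (σ : Fin n → Fin m → Fin n) (i : Fin n) : Prop :=
  i ∈ (lemStep S₀ u σ)^[n] S₀

instance {n m : ℕ} (S₀ : Finset (Fin n)) (u : Fin n → Protocol)
    (σ : Fin n → Fin m → Fin n) (i : Fin n) : Decidable (UReachable S₀ u σ i) := by
  unfold UReachable; infer_instance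

noncomputable def rProb {n m : ℕ} (w : Fin m → Fin n → Fin n → ℝ)
    (S₀ : Finset (Fin n)) (u : Fin n → Protocol) (i : Fin n) : ℝ :=
  ∑ σ : Fin n → Fin m → Fin n,
    if UReachable S₀ u σ i then ∏ a : Fin n, ∏ k : Fin m, w k a (σ a k) else 0

noncomputable def casCen {n m : ℕ} (w : Fin m → Fin n → Fin n → ℝ)
    (u : Fin n → Protocol) (j : Fin n) : ℝ :=
  ∑ i : Fin n, pLTM w u {j} i

noncomputable def pathW (N : ℕ) (i j : Fin N) : ℝ :=
  if j.val = i.val + 1 ∨ i.val = j.val + 1 then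
    (if i.val = 0 ∨ i.val = N - 1 then 1 else 1/2)
  else 0

noncomputable def cycleW (N : ℕ) (i j : Fin N) : ℝ :=
  if (i.val + 1) % N = j.val ∨ (j.val + 1) % N = i.val then 1/2 else 0

noncomputable def permW2 (N : ℕ) (i j : Fin N) : ℝ :=
  if ((i.val + 1) % N = j.val ∨ (j.val + 1) % N = i.val) ∧
      ¬((i.val = N - 2 ∧ j.val = N - 1) ∨ (i.val = N - 1 ∧ j.val = N - 2)) then
    (if i.val = N - 2 ∨ i.val = N - 1 then 1 else 1/2)
  else 0


noncomputable def numeas (m : ℕ) : Measure (Fin m → ℝ) :=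
  Measure.pi fun _ => volume.restrict (Set.Icc (0:ℝ) 1)

instance : IsProbabilityMeasure (volume.restrict (Set.Icc (0:ℝ) 1)) := ⟨by simp⟩

instance numeas_prob (m : ℕ) : IsProbabilityMeasure (numeas m) := by
  unfold numeas; infer_instance

lemma nu1_lt {c : ℝ} (h0 : 0 ≤ c) (h1 : c ≤ 1) :
    (volume.restrict (Set.Icc (0:ℝ) 1)) (Set.Iio c) = ENNReal.ofReal c := by
  rw [Measure.restrict_apply measurableSet_Iio]
  have : Set.Iio c ∩ Set.Icc 0 1 = Set.Ico 0 c := by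
    ext x; simp only [Set.mem_inter_iff, Set.mem_Iio, Set.mem_Icc, Set.mem_Ico]
    exact ⟨fun ⟨h, h2, _⟩ => ⟨h2, h⟩, fun ⟨h2, h⟩ => ⟨h, h2, le_trans h.le h1⟩⟩
  rw [this, Real.volume_Ico, sub_zero]

lemma nu1_not_lt {c : ℝ} (h0 : 0 ≤ c) (h1 : c ≤ 1) :
    (volume.restrict (Set.Icc (0:ℝ) 1)) {x | ¬ x < c} = ENNReal.ofReal (1 - c) := by
  have hs : {x : ℝ | ¬ x < c} = Set.Ici c := by ext x; simp [Set.mem_Ici, not_lt]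
  rw [hs, Measure.restrict_apply measurableSet_Ici]
  have : Set.Ici c ∩ Set.Icc 0 1 = Set.Icc c 1 := by
    ext x; simp only [Set.mem_inter_iff, Set.mem_Ici, Set.mem_Icc]
    exact ⟨fun ⟨h, _, h3⟩ => ⟨h, h3⟩, fun ⟨h, h3⟩ => ⟨h, le_trans h0 h, h3⟩⟩
  rw [this, Real.volume_Icc]

lemma numeas_all_lt {m : ℕ} {c : Fin m → ℝ} (h0 : ∀ k, 0 ≤ c k) (h1 : ∀ k, c k ≤ 1) :
    numeas m {v | ∀ k, v k < c k} = ENNReal.ofReal (∏ k, c k) := by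
  have hs : {v : Fin m → ℝ | ∀ k, v k < c k} = Set.pi Set.univ (fun k => Set.Iio (c k)) := by
    ext v; simp [Set.mem_pi]
  rw [hs, numeas, Measure.pi_pi, ENNReal.ofReal_prod_of_nonneg (fun k _ => h0 k)]
  exact Finset.prod_congr rfl fun k _ => nu1_lt (h0 k) (h1 k)

lemma numeas_all_not_lt {m : ℕ} {c : Fin m → ℝ} (h0 : ∀ k, 0 ≤ c k) (h1 : ∀ k, c k ≤ 1) :
    numeas m {v | ∀ k, ¬ v k < c k} = ENNReal.ofReal (∏ k, (1 - c k)) := by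
  have hs : {v : Fin m → ℝ | ∀ k, ¬ v k < c k} = Set.pi Set.univ (fun k => {x | ¬ x < c k}) := by
    ext v; simp [Set.mem_pi]
  rw [hs, numeas, Measure.pi_pi,
    ENNReal.ofReal_prod_of_nonneg (fun k _ => by linarith [h1 k])]
  exact Finset.prod_congr rfl fun k _ => nu1_not_lt (h0 k) (h1 k)

lemma meas_all_lt {m : ℕ} (c : Fin m → ℝ) : MeasurableSet {v : Fin m → ℝ | ∀ k, v k < c k} := by
  have : {v : Fin m → ℝ | ∀ k, v k < c k} = ⋂ k, (fun v => v k) ⁻¹' Set.Iio (c k) := by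
    ext v; simp
  rw [this]
  exact MeasurableSet.iInter fun k => (measurable_pi_apply k) measurableSet_Iio

lemma meas_ex_lt {m : ℕ} (c : Fin m → ℝ) : MeasurableSet {v : Fin m → ℝ | ∃ k, v k < c k} := by
  have : {v : Fin m → ℝ | ∃ k, v k < c k} = ⋃ k, (fun v => v k) ⁻¹' Set.Iio (c k) := by
    ext v; simp
  rw [this]
  exact MeasurableSet.iUnion fun k => (measurable_pi_apply k) measurableSet_Iio

lemma meas_all_not_lt {m : ℕ} (c : Fin m → ℝ) :
    MeasurableSet {v : Fin m → ℝ | ∀ k, ¬ v k < c k} := by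
  have : {v : Fin m → ℝ | ∀ k, ¬ v k < c k} = {v : Fin m → ℝ | ∃ k, v k < c k}ᶜ := by
    ext v; simp
  rw [this]; exact (meas_ex_lt c).compl

lemma numeas_or_case {m : ℕ} {a b : Fin m → ℝ} (h0 : ∀ k, 0 ≤ b k) (hba : ∀ k, b k ≤ a k)
    (h1 : ∀ k, a k ≤ 1) :
    numeas m {v | (∃ k, v k < a k) ∧ ∀ k, ¬ v k < b k}
      = ENNReal.ofReal (∏ k, (1 - b k) - ∏ k, (1 - a k)) := by
  have hb1 : ∀ k, b k ≤ 1 := fun k => le_trans (hba k) (h1 k)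
  have ha0 : ∀ k, 0 ≤ a k := fun k => le_trans (h0 k) (hba k)
  have hs : {v : Fin m → ℝ | (∃ k, v k < a k) ∧ ∀ k, ¬ v k < b k}
      = {v : Fin m → ℝ | ∀ k, ¬ v k < b k} \ {v : Fin m → ℝ | ∀ k, ¬ v k < a k} := by
    ext v
    simp only [Set.mem_setOf_eq, Set.mem_diff, not_forall, not_not]
    tauto
  have hsub : {v : Fin m → ℝ | ∀ k, ¬ v k < a k} ⊆ {v : Fin m → ℝ | ∀ k, ¬ v k < b k} :=
    fun v hv k h => hv k (lt_of_lt_of_le h (hba k))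
  rw [hs, measure_diff hsub (meas_all_not_lt a).nullMeasurableSet (measure_ne_top _ _),
    numeas_all_not_lt ha0 h1, numeas_all_not_lt h0 hb1,
    ← ENNReal.ofReal_sub _ (Finset.prod_nonneg fun k _ => by linarith [h1 k])]

lemma numeas_and_case {m : ℕ} {a b : Fin m → ℝ} (h0 : ∀ k, 0 ≤ b k) (hba : ∀ k, b k ≤ a k)
    (h1 : ∀ k, a k ≤ 1) :
    numeas m {v | (∀ k, v k < a k) ∧ ¬ ∀ k, v k < b k}
      = ENNReal.ofReal (∏ k, a k - ∏ k, b k) := by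
  have hb1 : ∀ k, b k ≤ 1 := fun k => le_trans (hba k) (h1 k)
  have ha0 : ∀ k, 0 ≤ a k := fun k => le_trans (h0 k) (hba k)
  have hs : {v : Fin m → ℝ | (∀ k, v k < a k) ∧ ¬ ∀ k, v k < b k}
      = {v : Fin m → ℝ | ∀ k, v k < a k} \ {v : Fin m → ℝ | ∀ k, v k < b k} := rfl
  have hsub : {v : Fin m → ℝ | ∀ k, v k < b k} ⊆ {v : Fin m → ℝ | ∀ k, v k < a k} :=
    fun v hv k => lt_of_lt_of_le (hv k) (hba k)
  rw [hs, measure_diff hsub (meas_all_lt b).nullMeasurableSet (measure_ne_top _ _),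
    numeas_all_lt ha0 h1, numeas_all_lt h0 hb1,
    ← ENNReal.ofReal_sub _ (Finset.prod_nonneg fun k _ => h0 k)]

lemma numeas_not_all_lt {m : ℕ} {b : Fin m → ℝ} (h0 : ∀ k, 0 ≤ b k) (h1 : ∀ k, b k ≤ 1) :
    numeas m {v | ¬ ∀ k, v k < b k} = ENNReal.ofReal (1 - ∏ k, b k) := by
  have hs : {v : Fin m → ℝ | ¬ ∀ k, v k < b k} = {v : Fin m → ℝ | ∀ k, v k < b k}ᶜ := rfl
  rw [hs, measure_compl (meas_all_lt b) (measure_ne_top _ _), numeas_all_lt h0 h1]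
  rw [measure_univ, ← ENNReal.ofReal_one,
    ← ENNReal.ofReal_sub _ (Finset.prod_nonneg fun k _ => h0 k)]

lemma numeas_ex_lt {m : ℕ} {a : Fin m → ℝ} (h0 : ∀ k, 0 ≤ a k) (h1 : ∀ k, a k ≤ 1) :
    numeas m {v | ∃ k, v k < a k} = ENNReal.ofReal (1 - ∏ k, (1 - a k)) := by
  have hs : {v : Fin m → ℝ | ∃ k, v k < a k} = {v : Fin m → ℝ | ∀ k, ¬ v k < a k}ᶜ := by
    ext v; simp
  rw [hs, measure_compl (meas_all_not_lt a) (measure_ne_top _ _), numeas_all_not_lt h0 h1]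
  rw [measure_univ, ← ENNReal.ofReal_one,
    ← ENNReal.ofReal_sub _ (Finset.prod_nonneg fun k _ => by linarith [h1 k])]

section LemSums
variable {n m : ℕ} (p : Fin m → Fin n → ℝ)

lemma sum_prod_eq (F : Fin m → Fin n → ℝ) :
    ∑ e : Fin m → Fin n, ∏ k, F k (e k) = ∏ k, ∑ j, F k j :=
  (Fintype.prod_sum F).symm

lemma lem_total (hp1 : ∀ k, ∑ j, p k j = 1) :
    ∑ e : Fin m → Fin n, ∏ k, p k (e k) = 1 := by
  rw [sum_prod_eq]; simp [hp1]

lemma lem_all_mem (A : Finset (Fin n)) :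
    ∑ e : Fin m → Fin n, (∏ k, p k (e k)) * (if ∀ k, e k ∈ A then 1 else 0)
      = ∏ k, ∑ j ∈ A, p k j := by
  have h1 : ∀ e : Fin m → Fin n,
      (∏ k, p k (e k)) * (if ∀ k, e k ∈ A then 1 else 0)
        = ∏ k, (p k (e k) * (if e k ∈ A then 1 else 0)) := by
    intro e
    rw [Finset.prod_mul_distrib]
    congr 1
    rw [Finset.prod_boole]
    simp
  simp_rw [h1]
  rw [sum_prod_eq (fun k j => p k j * (if j ∈ A then 1 else 0))]
  refine Finset.prod_congr rfl fun k _ => ?_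
  simp_rw [mul_ite, mul_one, mul_zero]
  rw [Finset.sum_ite_mem, Finset.univ_inter]

lemma lem_all_notmem (hp1 : ∀ k, ∑ j, p k j = 1) (B : Finset (Fin n)) :
    ∑ e : Fin m → Fin n, (∏ k, p k (e k)) * (if ∀ k, e k ∉ B then 1 else 0)
      = ∏ k, (1 - ∑ j ∈ B, p k j) := by
  have h1 : ∀ e : Fin m → Fin n,
      (∏ k, p k (e k)) * (if ∀ k, e k ∉ B then 1 else 0)
        = ∏ k, (p k (e k) * (if e k ∈ Bᶜ then 1 else 0)) := by
    intro e
    rw [Finset.prod_mul_distrib]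
    congr 1
    rw [Finset.prod_boole]
    simp
  simp_rw [h1]
  rw [sum_prod_eq (fun k j => p k j * (if j ∈ Bᶜ then 1 else 0))]
  refine Finset.prod_congr rfl fun k _ => ?_
  simp_rw [mul_ite, mul_one, mul_zero]
  rw [Finset.sum_ite_mem, Finset.univ_inter, ← hp1 k]
  have := Finset.sum_compl_add_sum B (fun j => p k j)
  linarith

lemma lem_or_case (hp1 : ∀ k, ∑ j, p k j = 1) {B A : Finset (Fin n)} (hBA : B ⊆ A) :
    ∑ e : Fin m → Fin n, (∏ k, p k (e k)) *
        (if (∃ k, e k ∈ A) ∧ ∀ k, e k ∉ B then 1 else 0)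
      = ∏ k, (1 - ∑ j ∈ B, p k j) - ∏ k, (1 - ∑ j ∈ A, p k j) := by
  have key : ∀ e : Fin m → Fin n,
      (if (∃ k, e k ∈ A) ∧ ∀ k, e k ∉ B then (1:ℝ) else 0)
        = (if ∀ k, e k ∉ B then 1 else 0) - (if ∀ k, e k ∉ A then 1 else 0) := by
    intro e
    by_cases hA : ∀ k, e k ∉ A
    · have hB : ∀ k, e k ∉ B := fun k h => hA k (hBA h)
      have hP : ¬ ∃ k, e k ∈ A := by push_neg; exact hA
      simp [hA, hB, hP]
    · have hP : ∃ k, e k ∈ A := by push_neg at hA; exact hA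
      by_cases hB : ∀ k, e k ∉ B
      · simp [hA, hB, hP]
      · simp [hA, hB]
  simp_rw [key, mul_sub, Finset.sum_sub_distrib]
  rw [lem_all_notmem p hp1 B, lem_all_notmem p hp1 A]

lemma lem_and_case {B A : Finset (Fin n)} (hBA : B ⊆ A) :
    ∑ e : Fin m → Fin n, (∏ k, p k (e k)) *
        (if (∀ k, e k ∈ A) ∧ ¬ ∀ k, e k ∈ B then 1 else 0)
      = ∏ k, ∑ j ∈ A, p k j - ∏ k, ∑ j ∈ B, p k j := by
  have key : ∀ e : Fin m → Fin n,
      (if (∀ k, e k ∈ A) ∧ ¬ ∀ k, e k ∈ B then (1:ℝ) else 0)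
        = (if ∀ k, e k ∈ A then 1 else 0) - (if ∀ k, e k ∈ B then 1 else 0) := by
    intro e
    by_cases hB : ∀ k, e k ∈ B
    · have hA : ∀ k, e k ∈ A := fun k => hBA (hB k)
      simp [hA, hB]
    · by_cases hA : ∀ k, e k ∈ A
      · simp [hA, hB]
      · simp [hA, hB]
  simp_rw [key, mul_sub, Finset.sum_sub_distrib]
  rw [lem_all_mem, lem_all_mem]

lemma lem_not_all_mem (hp1 : ∀ k, ∑ j, p k j = 1) (B : Finset (Fin n)) :
    ∑ e : Fin m → Fin n, (∏ k, p k (e k)) * (if ¬ ∀ k, e k ∈ B then 1 else 0)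
      = 1 - ∏ k, ∑ j ∈ B, p k j := by
  have key : ∀ e : Fin m → Fin n,
      (if ¬ ∀ k, e k ∈ B then (1:ℝ) else 0) = 1 - (if ∀ k, e k ∈ B then 1 else 0) := by
    intro e; by_cases hB : ∀ k, e k ∈ B <;> simp [hB]
  simp_rw [key, mul_sub, mul_one, Finset.sum_sub_distrib]
  rw [lem_all_mem, lem_total p hp1]

lemma lem_ex_mem (hp1 : ∀ k, ∑ j, p k j = 1) (A : Finset (Fin n)) :
    ∑ e : Fin m → Fin n, (∏ k, p k (e k)) * (if ∃ k, e k ∈ A then 1 else 0)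
      = 1 - ∏ k, (1 - ∑ j ∈ A, p k j) := by
  have key : ∀ e : Fin m → Fin n,
      (if ∃ k, e k ∈ A then (1:ℝ) else 0) = 1 - (if ∀ k, e k ∉ A then 1 else 0) := by
    intro e
    by_cases hA : ∀ k, e k ∉ A
    · have hP : ¬ ∃ k, e k ∈ A := by push_neg; exact hA
      simp [hA, hP]
    · have hP : ∃ k, e k ∈ A := by push_neg at hA; exact hA
      simp [hA, hP]
  simp_rw [key, mul_sub, mul_one, Finset.sum_sub_distrib]
  rw [lem_all_notmem p hp1 A, lem_total p hp1]

end LemSums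
section ChainLogic
variable {I c : ℕ → Prop}

lemma mono_of_step (h : ∀ s, I s → I (s + 1)) : ∀ s t, s ≤ t → I s → I t := by
  intro s t hst
  induction t, hst using Nat.le_induction with
  | base => exact id
  | succ t _ ih => exact fun hs => h t (ih hs)

lemma chain_case_start {N : ℕ} (hI : ∀ s, I s → I (s + 1)) (h0 : I 0) :
    ∀ s, s < N → (I (s + 1) ↔ I s ∨ c s) := by
  intro s _
  have h1 : I s := mono_of_step hI 0 s (Nat.zero_le s) h0
  have h2 : I (s + 1) := hI s h1
  tauto

lemma chain_case_never {N : ℕ} (hI : ∀ s, I s → I (s + 1)) (hN : ¬ I N) :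
    (∀ s, s < N → (I (s + 1) ↔ I s ∨ c s)) ↔ ∀ s, s < N → ¬ c s := by
  have hIs : ∀ s, s ≤ N → ¬ I s := fun s hs h => hN (mono_of_step hI s N hs h)
  constructor
  · intro h s hs hc
    exact hIs (s + 1) hs ((h s hs).2 (Or.inr hc))
  · intro h s hs
    have h1 : ¬ I s := hIs s (le_of_lt hs)
    have h2 : ¬ I (s + 1) := hIs (s + 1) hs
    have h3 : ¬ c s := h s hs
    tauto

lemma chain_case_trans {N t : ℕ} (hI : ∀ s, I s → I (s + 1)) (ht : t < N)
    (h0 : ¬ I t) (h1 : I (t + 1)) :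
    (∀ s, s < N → (I (s + 1) ↔ I s ∨ c s)) ↔ (c t ∧ ∀ s, s < t → ¬ c s) := by
  have hbelow : ∀ s, s ≤ t → ¬ I s := fun s hs h => h0 (mono_of_step hI s t hs h)
  constructor
  · intro h
    refine ⟨?_, ?_⟩
    · rcases (h t ht).1 h1 with h' | h'
      · exact absurd h' h0
      · exact h'
    · intro s hs hc
      have hsN : s < N := lt_trans hs ht
      exact hbelow (s + 1) hs ((h s hsN).2 (Or.inr hc))
  · rintro ⟨hct, hcs⟩ s hsN
    rcases lt_trichotomy s t with hst | rfl | hts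
    · have := hbelow (s + 1) hst
      have := hbelow s (le_of_lt hst)
      have := hcs s hst
      tauto
    · tauto
    · have h1s : I s := mono_of_step hI (t + 1) s hts h1
      have h2s : I (s + 1) := hI s h1s
      tauto

lemma exists_transition {P : ℕ → Prop} [DecidablePred P] :
    ∀ N : ℕ, ¬ P 0 → P N → ∃ t, t < N ∧ ¬ P t ∧ P (t + 1) := by
  intro N
  induction N with
  | zero => intro h0 hN; exact absurd hN h0
  | succ N ih =>
    intro h0 hN
    by_cases hPN : P N
    · obtain ⟨t, ht, h⟩ := ih h0 hPN
      exact ⟨t, lt_trans ht (Nat.lt_succ_self N), h⟩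
    · exact ⟨N, Nat.lt_succ_self N, hPN, hN⟩

lemma all_lt_iff_last {c : ℕ → Prop} {t : ℕ} (hc : ∀ s u, s ≤ u → c s → c u) :
    (∀ s, s < t + 1 → ¬ c s) ↔ ¬ c t := by
  constructor
  · exact fun h => h t (Nat.lt_succ_self t)
  · intro h s hs hcs
    exact h (hc s t (Nat.lt_succ_iff.mp hs) hcs)

lemma iterate_traj_iff {α : Type*} (f : α → α) (x : α) (T : ℕ → α) (N : ℕ) (h0 : T 0 = x) :
    (∀ s, s ≤ N → f^[s] x = T s) ↔ (∀ s, s < N → f (T s) = T (s + 1)) := by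
  constructor
  · intro h s hs
    rw [← h s (le_of_lt hs), ← Function.iterate_succ_apply' f s x]
    exact h (s + 1) hs
  · intro h
    intro s
    induction s with
    | zero => intro _; simpa using h0.symm
    | succ s ih =>
      intro hs
      have hsN : s ≤ N := le_of_lt hs
      rw [Function.iterate_succ_apply' f s x, ih hsN]
      exact h s hs

end ChainLogic
lemma chain_mono_subset {β : Type*} {T : ℕ → Finset β} (hT : ∀ s, T s ⊆ T (s + 1)) :
    ∀ s t, s ≤ t → T s ⊆ T t := fun s t hst x hx =>
  mono_of_step (I := fun s => x ∈ T s) (fun s h => hT s h) s t hst hx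

section NodeEq
variable {n m : ℕ} (w : Fin m → Fin n → Fin n → ℝ) (u : Fin n → Protocol)

lemma node_eq (hw0 : ∀ k i j, 0 ≤ w k i j) (hw1 : ∀ k i, ∑ j : Fin n, w k i j = 1)
    (i : Fin n) (T : ℕ → Finset (Fin n)) (hT : ∀ s, T s ⊆ T (s + 1)) :
    numeas m {v : Fin m → ℝ | ∀ s, s < n → ((i ∈ T (s + 1)) ↔ i ∈ T s ∨
        ((u i = Protocol.OR ∧ ∃ k, v k < ∑ j ∈ T s, w k i j) ∨
         (u i = Protocol.AND ∧ ∀ k, v k < ∑ j ∈ T s, w k i j)))}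
      = ENNReal.ofReal (∑ e : Fin m → Fin n, (∏ k, w k i (e k)) *
          (if ∀ s, s < n → ((i ∈ T (s + 1)) ↔ i ∈ T s ∨
              ((u i = Protocol.OR ∧ ∃ k, e k ∈ T s) ∨
               (u i = Protocol.AND ∧ ∀ k, e k ∈ T s))) then 1 else 0)) := by
  have hImono : ∀ s, (i ∈ T s) → i ∈ T (s + 1) := fun s h => hT s h
  have hp1 : ∀ k, ∑ j : Fin n, w k i j = 1 := fun k => hw1 k i
  have ha0 : ∀ (A : Finset (Fin n)) k, 0 ≤ ∑ j ∈ A, w k i j :=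
    fun A k => Finset.sum_nonneg fun j _ => hw0 k i j
  have ha1 : ∀ (A : Finset (Fin n)) k, ∑ j ∈ A, w k i j ≤ 1 := by
    intro A k
    rw [← hw1 k i]
    exact Finset.sum_le_sum_of_subset_of_nonneg (Finset.subset_univ A)
      fun j _ _ => hw0 k i j
  have hamono : ∀ s k, ∑ j ∈ T s, w k i j ≤ ∑ j ∈ T (s + 1), w k i j :=
    fun s k => Finset.sum_le_sum_of_subset_of_nonneg (hT s) fun j _ _ => hw0 k i j
  by_cases hI0 : i ∈ T 0
  · -- seed: condition always true on both sides
    have hL : ∀ (c : ℕ → Prop), ∀ s, s < n → ((i ∈ T (s + 1)) ↔ i ∈ T s ∨ c s) :=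
      fun c => chain_case_start hImono hI0
    have hset : {v : Fin m → ℝ | ∀ s, s < n → ((i ∈ T (s + 1)) ↔ i ∈ T s ∨
        ((u i = Protocol.OR ∧ ∃ k, v k < ∑ j ∈ T s, w k i j) ∨
         (u i = Protocol.AND ∧ ∀ k, v k < ∑ j ∈ T s, w k i j)))} = Set.univ := by
      ext v; simp only [Set.mem_setOf_eq, Set.mem_univ, iff_true]
      exact hL _
    have hsum : ∀ e : Fin m → Fin n, (if ∀ s, s < n → ((i ∈ T (s + 1)) ↔ i ∈ T s ∨
        ((u i = Protocol.OR ∧ ∃ k, e k ∈ T s) ∨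
         (u i = Protocol.AND ∧ ∀ k, e k ∈ T s))) then (1:ℝ) else 0) = 1 := by
      intro e; rw [if_pos (hL _)]
    simp_rw [hsum, mul_one, lem_total (fun k j => w k i j) hp1, hset, measure_univ,
      ENNReal.ofReal_one]
  · have hcase : u i = Protocol.OR ∨ u i = Protocol.AND := by
      cases h : u i
      · exact Or.inl rfl
      · exact Or.inr rfl
    rcases hcase with hu | hu
    ·
      have hsimp : ∀ (P Q : Prop), ((u i = Protocol.OR ∧ P) ∨ (u i = Protocol.AND ∧ Q)) ↔ P := by
        intro P Q; rw [hu]; simp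
      have hcmonoL : ∀ (v : Fin m → ℝ) s u', s ≤ u' →
          (∃ k, v k < ∑ j ∈ T s, w k i j) → (∃ k, v k < ∑ j ∈ T u', w k i j) := by
        rintro v s u' hsu ⟨k, hk⟩
        refine ⟨k, lt_of_lt_of_le hk ?_⟩
        exact Finset.sum_le_sum_of_subset_of_nonneg
          (chain_mono_subset hT s u' hsu) fun j _ _ => hw0 k i j
      have hcmonoR : ∀ (e : Fin m → Fin n) s u', s ≤ u' →
          (∃ k, e k ∈ T s) → (∃ k, e k ∈ T u') := by
        rintro e s u' hsu ⟨k, hk⟩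
        exact ⟨k, chain_mono_subset hT s u' hsu hk⟩
      by_cases hIn : i ∈ T n
      · obtain ⟨t, htn, ht0, ht1⟩ :=
          exists_transition (P := fun s => i ∈ T s) n hI0 hIn
        have hiffL : ∀ v : Fin m → ℝ,
            ((∀ s, s < n → ((i ∈ T (s + 1)) ↔ i ∈ T s ∨
              ((u i = Protocol.OR ∧ ∃ k, v k < ∑ j ∈ T s, w k i j) ∨
               (u i = Protocol.AND ∧ ∀ k, v k < ∑ j ∈ T s, w k i j)))) ↔
             ((∃ k, v k < ∑ j ∈ T t, w k i j) ∧
               ∀ s, s < t → ¬ (∃ k, v k < ∑ j ∈ T s, w k i j))) := by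
          intro v
          simp_rw [hsimp]
          exact chain_case_trans hImono htn ht0 ht1
        have hiffR : ∀ e : Fin m → Fin n,
            ((∀ s, s < n → ((i ∈ T (s + 1)) ↔ i ∈ T s ∨
              ((u i = Protocol.OR ∧ ∃ k, e k ∈ T s) ∨
               (u i = Protocol.AND ∧ ∀ k, e k ∈ T s)))) ↔
             ((∃ k, e k ∈ T t) ∧ ∀ s, s < t → ¬ (∃ k, e k ∈ T s))) := by
          intro e
          simp_rw [hsimp]
          exact chain_case_trans hImono htn ht0 ht1
        simp_rw [hiffR]
        rw [Set.ext fun v => hiffL v]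
        cases t with
        | zero =>
          have hL : {v : Fin m → ℝ | (∃ k, v k < ∑ j ∈ T 0, w k i j) ∧
               ∀ s, s < 0 → ¬ (∃ k, v k < ∑ j ∈ T s, w k i j)}
              = {v : Fin m → ℝ | ∃ k, v k < ∑ j ∈ T 0, w k i j} := by
            ext v; simp
          have hR : ∀ e : Fin m → Fin n, (((∃ k, e k ∈ T 0) ∧
              ∀ s, s < 0 → ¬ (∃ k, e k ∈ T s)) ↔ (∃ k, e k ∈ T 0)) := by
            intro e; simp
          simp_rw [hR]
          rw [hL, numeas_ex_lt (ha0 (T 0)) (ha1 (T 0)),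
            lem_ex_mem (fun k j => w k i j) hp1 (T 0)]
        | succ t' =>
          have hL : {v : Fin m → ℝ | (∃ k, v k < ∑ j ∈ T (t' + 1), w k i j) ∧
               ∀ s, s < t' + 1 → ¬ (∃ k, v k < ∑ j ∈ T s, w k i j)}
              = {v : Fin m → ℝ | (∃ k, v k < ∑ j ∈ T (t' + 1), w k i j) ∧
                  ∀ k, ¬ v k < ∑ j ∈ T t', w k i j} := by
            ext v
            simp only [Set.mem_setOf_eq, and_congr_right_iff]
            intro _
            rw [all_lt_iff_last (fun s u' hsu => hcmonoL v s u' hsu), not_exists]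
          have hR : ∀ e : Fin m → Fin n, (((∃ k, e k ∈ T (t' + 1)) ∧
              ∀ s, s < t' + 1 → ¬ (∃ k, e k ∈ T s)) ↔
              ((∃ k, e k ∈ T (t' + 1)) ∧ ∀ k, e k ∉ T t')) := by
            intro e
            rw [and_congr_right_iff]
            intro _
            rw [all_lt_iff_last (fun s u' hsu => hcmonoR e s u' hsu), not_exists]
          simp_rw [hR]
          rw [hL, numeas_or_case (ha0 (T t')) (hamono t') (ha1 (T (t' + 1))),
            lem_or_case (fun k j => w k i j) hp1 (hT t')]
      · -- never active
        obtain ⟨n', rfl⟩ : ∃ n', n = n' + 1 :=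
          ⟨n - 1, (Nat.succ_pred_eq_of_pos i.pos).symm⟩
        have hiffL : ∀ v : Fin m → ℝ,
            ((∀ s, s < n' + 1 → ((i ∈ T (s + 1)) ↔ i ∈ T s ∨
              ((u i = Protocol.OR ∧ ∃ k, v k < ∑ j ∈ T s, w k i j) ∨
               (u i = Protocol.AND ∧ ∀ k, v k < ∑ j ∈ T s, w k i j)))) ↔
             (∀ k, ¬ v k < ∑ j ∈ T n', w k i j)) := by
          intro v
          simp_rw [hsimp]
          rw [chain_case_never hImono hIn,
            all_lt_iff_last (fun s u' hsu => hcmonoL v s u' hsu), not_exists]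
        have hiffR : ∀ e : Fin m → Fin (n' + 1),
            ((∀ s, s < n' + 1 → ((i ∈ T (s + 1)) ↔ i ∈ T s ∨
              ((u i = Protocol.OR ∧ ∃ k, e k ∈ T s) ∨
               (u i = Protocol.AND ∧ ∀ k, e k ∈ T s)))) ↔
             (∀ k, e k ∉ T n')) := by
          intro e
          simp_rw [hsimp]
          rw [chain_case_never hImono hIn,
            all_lt_iff_last (fun s u' hsu => hcmonoR e s u' hsu), not_exists]
        simp_rw [hiffR]
        rw [Set.ext fun v => hiffL v,
          numeas_all_not_lt (ha0 (T n')) (ha1 (T n')),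
          lem_all_notmem (fun k j => w k i j) hp1 (T n')]
    ·
      have hsimp : ∀ (P Q : Prop), ((u i = Protocol.OR ∧ P) ∨ (u i = Protocol.AND ∧ Q)) ↔ Q := by
        intro P Q; rw [hu]; simp
      have hcmonoL : ∀ (v : Fin m → ℝ) s u', s ≤ u' →
          (∀ k, v k < ∑ j ∈ T s, w k i j) → (∀ k, v k < ∑ j ∈ T u', w k i j) := by
        intro v s u' hsu h k
        refine lt_of_lt_of_le (h k) ?_
        exact Finset.sum_le_sum_of_subset_of_nonneg
          (chain_mono_subset hT s u' hsu) fun j _ _ => hw0 k i j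
      have hcmonoR : ∀ (e : Fin m → Fin n) s u', s ≤ u' →
          (∀ k, e k ∈ T s) → (∀ k, e k ∈ T u') := by
        intro e s u' hsu h k
        exact chain_mono_subset hT s u' hsu (h k)
      by_cases hIn : i ∈ T n
      · obtain ⟨t, htn, ht0, ht1⟩ :=
          exists_transition (P := fun s => i ∈ T s) n hI0 hIn
        have hiffL : ∀ v : Fin m → ℝ,
            ((∀ s, s < n → ((i ∈ T (s + 1)) ↔ i ∈ T s ∨
              ((u i = Protocol.OR ∧ ∃ k, v k < ∑ j ∈ T s, w k i j) ∨
               (u i = Protocol.AND ∧ ∀ k, v k < ∑ j ∈ T s, w k i j)))) ↔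
             ((∀ k, v k < ∑ j ∈ T t, w k i j) ∧
               ∀ s, s < t → ¬ (∀ k, v k < ∑ j ∈ T s, w k i j))) := by
          intro v
          simp_rw [hsimp]
          exact chain_case_trans hImono htn ht0 ht1
        have hiffR : ∀ e : Fin m → Fin n,
            ((∀ s, s < n → ((i ∈ T (s + 1)) ↔ i ∈ T s ∨
              ((u i = Protocol.OR ∧ ∃ k, e k ∈ T s) ∨
               (u i = Protocol.AND ∧ ∀ k, e k ∈ T s)))) ↔
             ((∀ k, e k ∈ T t) ∧ ∀ s, s < t → ¬ (∀ k, e k ∈ T s))) := by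
          intro e
          simp_rw [hsimp]
          exact chain_case_trans hImono htn ht0 ht1
        simp_rw [hiffR]
        rw [Set.ext fun v => hiffL v]
        cases t with
        | zero =>
          have hL : {v : Fin m → ℝ | (∀ k, v k < ∑ j ∈ T 0, w k i j) ∧
               ∀ s, s < 0 → ¬ (∀ k, v k < ∑ j ∈ T s, w k i j)}
              = {v : Fin m → ℝ | ∀ k, v k < ∑ j ∈ T 0, w k i j} := by
            ext v; simp
          have hR : ∀ e : Fin m → Fin n, (((∀ k, e k ∈ T 0) ∧
              ∀ s, s < 0 → ¬ (∀ k, e k ∈ T s)) ↔ (∀ k, e k ∈ T 0)) := by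
            intro e; simp
          simp_rw [hR]
          rw [hL, numeas_all_lt (ha0 (T 0)) (ha1 (T 0)),
            lem_all_mem (fun k j => w k i j) (T 0)]
        | succ t' =>
          have hL : {v : Fin m → ℝ | (∀ k, v k < ∑ j ∈ T (t' + 1), w k i j) ∧
               ∀ s, s < t' + 1 → ¬ (∀ k, v k < ∑ j ∈ T s, w k i j)}
              = {v : Fin m → ℝ | (∀ k, v k < ∑ j ∈ T (t' + 1), w k i j) ∧
                  ¬ ∀ k, v k < ∑ j ∈ T t', w k i j} := by
            ext v
            simp only [Set.mem_setOf_eq, and_congr_right_iff]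
            intro _
            rw [all_lt_iff_last (fun s u' hsu => hcmonoL v s u' hsu)]
          have hR : ∀ e : Fin m → Fin n, (((∀ k, e k ∈ T (t' + 1)) ∧
              ∀ s, s < t' + 1 → ¬ (∀ k, e k ∈ T s)) ↔
              ((∀ k, e k ∈ T (t' + 1)) ∧ ¬ ∀ k, e k ∈ T t')) := by
            intro e
            rw [and_congr_right_iff]
            intro _
            rw [all_lt_iff_last (fun s u' hsu => hcmonoR e s u' hsu)]
          simp_rw [hR]
          rw [hL, numeas_and_case (ha0 (T t')) (hamono t') (ha1 (T (t' + 1))),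
            lem_and_case (fun k j => w k i j) (hT t')]
      · -- never active
        obtain ⟨n', rfl⟩ : ∃ n', n = n' + 1 :=
          ⟨n - 1, (Nat.succ_pred_eq_of_pos i.pos).symm⟩
        have hiffL : ∀ v : Fin m → ℝ,
            ((∀ s, s < n' + 1 → ((i ∈ T (s + 1)) ↔ i ∈ T s ∨
              ((u i = Protocol.OR ∧ ∃ k, v k < ∑ j ∈ T s, w k i j) ∨
               (u i = Protocol.AND ∧ ∀ k, v k < ∑ j ∈ T s, w k i j)))) ↔
             (¬ ∀ k, v k < ∑ j ∈ T n', w k i j)) := by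
          intro v
          simp_rw [hsimp]
          rw [chain_case_never hImono hIn,
            all_lt_iff_last (fun s u' hsu => hcmonoL v s u' hsu)]
        have hiffR : ∀ e : Fin m → Fin (n' + 1),
            ((∀ s, s < n' + 1 → ((i ∈ T (s + 1)) ↔ i ∈ T s ∨
              ((u i = Protocol.OR ∧ ∃ k, e k ∈ T s) ∨
               (u i = Protocol.AND ∧ ∀ k, e k ∈ T s)))) ↔
             (¬ ∀ k, e k ∈ T n')) := by
          intro e
          simp_rw [hsimp]
          rw [chain_case_never hImono hIn,
            all_lt_iff_last (fun s u' hsu => hcmonoR e s u' hsu)]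
        simp_rw [hiffR]
        rw [Set.ext fun v => hiffL v,
          numeas_not_all_lt (ha0 (T n')) (ha1 (T n')),
          lem_not_all_mem (fun k j => w k i j) hp1 (T n')]

end NodeEq
section Traj
variable {n m : ℕ} (w : Fin m → Fin n → Fin n → ℝ) (u : Fin n → Protocol)
  (S₀ : Finset (Fin n))

instance thMeasure_prob (n m : ℕ) : IsProbabilityMeasure (thMeasure n m) := by
  have : thMeasure n m = Measure.pi fun _ : Fin n => numeas m := rfl
  rw [this]; infer_instance

def nodeSet (i : Fin n) (T : ℕ → Finset (Fin n)) : Set (Fin m → ℝ) :=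
  {v : Fin m → ℝ | ∀ s, s < n → ((i ∈ T (s + 1)) ↔ i ∈ T s ∨
      ((u i = Protocol.OR ∧ ∃ k, v k < ∑ j ∈ T s, w k i j) ∨
       (u i = Protocol.AND ∧ ∀ k, v k < ∑ j ∈ T s, w k i j)))}

lemma mem_ltmStep (μ : Fin n → Fin m → ℝ) (A : Finset (Fin n)) (i : Fin n) :
    i ∈ ltmStep w u μ A ↔ i ∈ A ∨
      ((u i = Protocol.OR ∧ ∃ k, μ i k < ∑ j ∈ A, w k i j) ∨
       (u i = Protocol.AND ∧ ∀ k, μ i k < ∑ j ∈ A, w k i j)) := by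
  simp [ltmStep]

lemma mem_lemStep (σ : Fin n → Fin m → Fin n) (A : Finset (Fin n)) (i : Fin n) :
    i ∈ lemStep S₀ u σ A ↔ (i ∈ S₀ ∨ i ∈ A) ∨
      ((u i = Protocol.OR ∧ ∃ k, σ i k ∈ A) ∨
       (u i = Protocol.AND ∧ ∀ k, σ i k ∈ A)) := by
  simp [lemStep, Finset.mem_union, or_assoc]

lemma subset_ltmStep (μ : Fin n → Fin m → ℝ) (A : Finset (Fin n)) :
    A ⊆ ltmStep w u μ A := fun i hi => (mem_ltmStep w u μ A i).2 (Or.inl hi)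

lemma subset_lemStep (σ : Fin n → Fin m → Fin n) (A : Finset (Fin n)) :
    A ⊆ lemStep S₀ u σ A := fun i hi => (mem_lemStep u S₀ σ A i).2 (Or.inl (Or.inr hi))

lemma event_eq_empty (T : ℕ → Finset (Fin n)) (h : T 0 ≠ S₀) :
    {μ : Fin n → Fin m → ℝ | ∀ s, s ≤ n → (ltmStep w u μ)^[s] S₀ = T s} = ∅ := by
  ext μ
  simp only [Set.mem_setOf_eq, Set.mem_empty_iff_false, iff_false, not_forall]
  exact ⟨0, by simp [Ne.symm h]⟩

lemma event_eq_pi (T : ℕ → Finset (Fin n)) (hT0 : T 0 = S₀) :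
    {μ : Fin n → Fin m → ℝ | ∀ s, s ≤ n → (ltmStep w u μ)^[s] S₀ = T s}
      = Set.pi Set.univ (fun i => nodeSet w u i T) := by
  ext μ
  rw [Set.mem_setOf_eq, iterate_traj_iff _ _ _ _ hT0]
  simp only [Set.mem_pi, Set.mem_univ, forall_true_left, nodeSet, Set.mem_setOf_eq]
  constructor
  · intro h i s hs
    have := h s hs
    rw [Finset.ext_iff] at this
    rw [← this i, mem_ltmStep]
  · intro h s hs
    ext i
    rw [mem_ltmStep, ← h i s hs]

lemma nodeSet_meas (i : Fin n) (T : ℕ → Finset (Fin n)) :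
    MeasurableSet (nodeSet w u i T) := by
  have hrw : nodeSet w u i T = ⋂ (s : ℕ), ⋂ (_ : s < n),
      {v : Fin m → ℝ | (i ∈ T (s + 1)) ↔ i ∈ T s ∨
        ((u i = Protocol.OR ∧ ∃ k, v k < ∑ j ∈ T s, w k i j) ∨
         (u i = Protocol.AND ∧ ∀ k, v k < ∑ j ∈ T s, w k i j))} := by
    ext v; simp [nodeSet]
  rw [hrw]
  refine MeasurableSet.iInter fun s => MeasurableSet.iInter fun hs => ?_
  have hcond : MeasurableSet {v : Fin m → ℝ |
      (u i = Protocol.OR ∧ ∃ k, v k < ∑ j ∈ T s, w k i j) ∨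
      (u i = Protocol.AND ∧ ∀ k, v k < ∑ j ∈ T s, w k i j)} := by
    by_cases hOR : u i = Protocol.OR
    · have : {v : Fin m → ℝ |
          (u i = Protocol.OR ∧ ∃ k, v k < ∑ j ∈ T s, w k i j) ∨
          (u i = Protocol.AND ∧ ∀ k, v k < ∑ j ∈ T s, w k i j)}
          = {v : Fin m → ℝ | ∃ k, v k < ∑ j ∈ T s, w k i j} := by
        ext v; simp [hOR]
      rw [this]; exact meas_ex_lt _
    · have hAND : u i = Protocol.AND := by
        cases h : u i
        · exact absurd h hOR
        · rfl
      have : {v : Fin m → ℝ |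
          (u i = Protocol.OR ∧ ∃ k, v k < ∑ j ∈ T s, w k i j) ∨
          (u i = Protocol.AND ∧ ∀ k, v k < ∑ j ∈ T s, w k i j)}
          = {v : Fin m → ℝ | ∀ k, v k < ∑ j ∈ T s, w k i j} := by
        ext v; simp [hAND]
      rw [this]; exact meas_all_lt _
  by_cases h1 : i ∈ T (s + 1) <;> by_cases h2 : i ∈ T s
  · have : {v : Fin m → ℝ | (i ∈ T (s + 1)) ↔ i ∈ T s ∨
        ((u i = Protocol.OR ∧ ∃ k, v k < ∑ j ∈ T s, w k i j) ∨
         (u i = Protocol.AND ∧ ∀ k, v k < ∑ j ∈ T s, w k i j))}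
        = Set.univ := by
      ext v; simp [h1, h2]
    rw [this]; exact MeasurableSet.univ
  · have : {v : Fin m → ℝ | (i ∈ T (s + 1)) ↔ i ∈ T s ∨
        ((u i = Protocol.OR ∧ ∃ k, v k < ∑ j ∈ T s, w k i j) ∨
         (u i = Protocol.AND ∧ ∀ k, v k < ∑ j ∈ T s, w k i j))}
        = {v : Fin m → ℝ |
            (u i = Protocol.OR ∧ ∃ k, v k < ∑ j ∈ T s, w k i j) ∨
            (u i = Protocol.AND ∧ ∀ k, v k < ∑ j ∈ T s, w k i j)} := by
      ext v; simp [h1, h2]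
    rw [this]; exact hcond
  · have : {v : Fin m → ℝ | (i ∈ T (s + 1)) ↔ i ∈ T s ∨
        ((u i = Protocol.OR ∧ ∃ k, v k < ∑ j ∈ T s, w k i j) ∨
         (u i = Protocol.AND ∧ ∀ k, v k < ∑ j ∈ T s, w k i j))}
        = ∅ := by
      ext v; simp [h1, h2]
    rw [this]; exact MeasurableSet.empty
  · have : {v : Fin m → ℝ | (i ∈ T (s + 1)) ↔ i ∈ T s ∨
        ((u i = Protocol.OR ∧ ∃ k, v k < ∑ j ∈ T s, w k i j) ∨
         (u i = Protocol.AND ∧ ∀ k, v k < ∑ j ∈ T s, w k i j))}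
        = {v : Fin m → ℝ |
            (u i = Protocol.OR ∧ ∃ k, v k < ∑ j ∈ T s, w k i j) ∨
            (u i = Protocol.AND ∧ ∀ k, v k < ∑ j ∈ T s, w k i j)}ᶜ := by
      ext v; simp [h1, h2]
    rw [this]; exact hcond.compl

lemma event_meas (T : ℕ → Finset (Fin n)) :
    MeasurableSet {μ : Fin n → Fin m → ℝ | ∀ s, s ≤ n → (ltmStep w u μ)^[s] S₀ = T s} := by
  by_cases h0 : T 0 = S₀
  · rw [event_eq_pi w u S₀ T h0]
    exact MeasurableSet.univ_pi fun i => nodeSet_meas w u i T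
  · rw [event_eq_empty w u S₀ T h0]
    exact MeasurableSet.empty

end Traj
section TrajEq
variable {n m : ℕ} (w : Fin m → Fin n → Fin n → ℝ) (u : Fin n → Protocol)
  (S₀ : Finset (Fin n))

lemma node_sum_nonneg (hw0 : ∀ k i j, 0 ≤ w k i j) (i : Fin n)
    (P : (Fin m → Fin n) → Prop) [DecidablePred P] :
    0 ≤ ∑ e : Fin m → Fin n, (∏ k, w k i (e k)) * (if P e then 1 else 0) := by
  refine Finset.sum_nonneg fun e _ => mul_nonneg ?_ ?_
  · exact Finset.prod_nonneg fun k _ => hw0 k i (e k)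
  · split <;> norm_num

lemma traj_eq (hw0 : ∀ k i j, 0 ≤ w k i j) (hw1 : ∀ k i, ∑ j : Fin n, w k i j = 1)
    (T : ℕ → Finset (Fin n)) :
    thMeasure n m {μ | ∀ s, s ≤ n → (ltmStep w u μ)^[s] S₀ = T s}
      = ENNReal.ofReal (∑ σ : Fin n → Fin m → Fin n,
          (∏ a : Fin n, ∏ k : Fin m, w k a (σ a k)) *
          (if ∀ s, s ≤ n → (lemStep S₀ u σ)^[s] S₀ = T s then 1 else 0)) := by
  by_cases h0 : T 0 = S₀
  swap
  · rw [event_eq_empty w u S₀ T h0]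
    have hneg : ∀ σ : Fin n → Fin m → Fin n,
        ¬ (∀ s, s ≤ n → (lemStep S₀ u σ)^[s] S₀ = T s) := by
      intro σ h
      exact h0 ((h 0 (Nat.zero_le n)).symm ▸ rfl)
    simp [hneg]
  by_cases hmono : ∀ s, s < n → T s ⊆ T (s + 1)
  swap
  · push_neg at hmono
    obtain ⟨s₀, hs₀n, hnsub⟩ := hmono
    obtain ⟨x, hx1, hx2⟩ := Finset.not_subset.mp hnsub
    have hL : thMeasure n m {μ | ∀ s, s ≤ n → (ltmStep w u μ)^[s] S₀ = T s} = 0 := by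
      rw [event_eq_pi w u S₀ T h0]
      rw [show thMeasure n m = Measure.pi fun _ : Fin n => numeas m from rfl, Measure.pi_pi]
      refine Finset.prod_eq_zero (Finset.mem_univ x) ?_
      have : nodeSet w u x T = ∅ := by
        ext v
        simp only [nodeSet, Set.mem_setOf_eq, Set.mem_empty_iff_false, iff_false, not_forall]
        exact ⟨s₀, hs₀n, by simp [hx1, hx2]⟩
      rw [this, measure_empty]
    rw [hL]
    have hneg : ∀ σ : Fin n → Fin m → Fin n,
        ¬ (∀ s, s ≤ n → (lemStep S₀ u σ)^[s] S₀ = T s) := by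
      intro σ h
      apply hx2
      have h1 := h s₀ (le_of_lt hs₀n)
      have h2 := h (s₀ + 1) hs₀n
      rw [← h2, Function.iterate_succ_apply']
      exact subset_lemStep u S₀ σ _ (h1 ▸ hx1)
    simp [hneg]
  · -- main case
    set T' : ℕ → Finset (Fin n) := fun s => T (min s n) with hT'def
    have hTeq : ∀ s, s ≤ n → T' s = T s := by
      intro s hs; simp [hT'def, min_eq_left hs]
    have hT' : ∀ s, T' s ⊆ T' (s + 1) := by
      intro s
      rcases lt_or_ge s n with h | h
      · rw [hTeq s (le_of_lt h), hTeq (s + 1) h]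
        exact hmono s h
      · have : min s n = n := min_eq_right h
        have h2 : min (s + 1) n = n := min_eq_right (le_trans h (Nat.le_succ s))
        simp [hT'def, this, h2]
    have hsub0 : ∀ s, s ≤ n → S₀ ⊆ T s := by
      intro s hs
      rw [← hTeq s hs, ← h0, ← hTeq 0 (Nat.zero_le n)]
      exact chain_mono_subset hT' 0 s (Nat.zero_le s)
    have hnode : ∀ i, nodeSet w u i T = nodeSet w u i T' := by
      intro i
      unfold nodeSet
      ext v
      simp only [Set.mem_setOf_eq]
      refine forall_congr' fun s => ?_
      refine imp_congr_right fun hs => ?_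
      rw [hTeq s (le_of_lt hs), hTeq (s + 1) hs]
    -- LHS
    rw [event_eq_pi w u S₀ T h0]
    have hpieq : (Set.pi Set.univ fun i => nodeSet w u i T)
        = Set.pi Set.univ fun i => nodeSet w u i T' := by
      have : (fun i => nodeSet w u i T) = fun i => nodeSet w u i T' := funext hnode
      rw [this]
    rw [hpieq, show thMeasure n m = Measure.pi fun _ : Fin n => numeas m from rfl,
      Measure.pi_pi]
    have hLfac : ∀ i : Fin n, numeas m (nodeSet w u i T')
        = ENNReal.ofReal (∑ e : Fin m → Fin n, (∏ k, w k i (e k)) *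
          (if ∀ s, s < n → ((i ∈ T' (s + 1)) ↔ i ∈ T' s ∨
              ((u i = Protocol.OR ∧ ∃ k, e k ∈ T' s) ∨
               (u i = Protocol.AND ∧ ∀ k, e k ∈ T' s))) then 1 else 0)) :=
      fun i => node_eq w u hw0 hw1 i T' hT'
    rw [Finset.prod_congr rfl fun i _ => hLfac i]
    rw [← ENNReal.ofReal_prod_of_nonneg fun i _ => node_sum_nonneg w hw0 i _]
    congr 1
    -- RHS factorization
    have hstepiff : ∀ (σ : Fin n → Fin m → Fin n) s, s < n →
        ((lemStep S₀ u σ (T' s) = T' (s + 1)) ↔ ∀ i : Fin n,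
          ((i ∈ T' (s + 1)) ↔ i ∈ T' s ∨
            ((u i = Protocol.OR ∧ ∃ k, σ i k ∈ T' s) ∨
             (u i = Protocol.AND ∧ ∀ k, σ i k ∈ T' s)))) := by
      intro σ s hs
      rw [Finset.ext_iff]
      refine forall_congr' fun i => ?_
      rw [mem_lemStep]
      have h1 : i ∈ S₀ → i ∈ T' s := by
        intro h
        rw [hTeq s (le_of_lt hs)]
        exact hsub0 s (le_of_lt hs) h
      tauto
    have hcond : ∀ σ : Fin n → Fin m → Fin n,
        (∀ s, s ≤ n → (lemStep S₀ u σ)^[s] S₀ = T s) ↔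
        (∀ i : Fin n, ∀ s, s < n → ((i ∈ T' (s + 1)) ↔ i ∈ T' s ∨
            ((u i = Protocol.OR ∧ ∃ k, σ i k ∈ T' s) ∨
             (u i = Protocol.AND ∧ ∀ k, σ i k ∈ T' s)))) := by
      intro σ
      rw [iterate_traj_iff _ _ _ _ h0]
      have hTstep : ∀ s, s < n →
          ((lemStep S₀ u σ (T s) = T (s + 1)) ↔ (lemStep S₀ u σ (T' s) = T' (s + 1))) := by
        intro s hs
        rw [hTeq s (le_of_lt hs), hTeq (s + 1) hs]
      constructor
      · intro h i s hs
        exact ((hstepiff σ s hs).1 ((hTstep s hs).1 (h s hs))) i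
      · intro h s hs
        exact (hTstep s hs).2 ((hstepiff σ s hs).2 fun i => h i s hs)
    simp_rw [hcond]
    have hprodite : ∀ σ : Fin n → Fin m → Fin n,
        (if (∀ i : Fin n, ∀ s, s < n → ((i ∈ T' (s + 1)) ↔ i ∈ T' s ∨
            ((u i = Protocol.OR ∧ ∃ k, σ i k ∈ T' s) ∨
             (u i = Protocol.AND ∧ ∀ k, σ i k ∈ T' s)))) then (1:ℝ) else 0)
          = ∏ i : Fin n, (if (∀ s, s < n → ((i ∈ T' (s + 1)) ↔ i ∈ T' s ∨
            ((u i = Protocol.OR ∧ ∃ k, σ i k ∈ T' s) ∨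
             (u i = Protocol.AND ∧ ∀ k, σ i k ∈ T' s)))) then (1:ℝ) else 0) := by
      intro σ
      by_cases h : (∀ i : Fin n, ∀ s, s < n → ((i ∈ T' (s + 1)) ↔ i ∈ T' s ∨
            ((u i = Protocol.OR ∧ ∃ k, σ i k ∈ T' s) ∨
             (u i = Protocol.AND ∧ ∀ k, σ i k ∈ T' s))))
      · rw [if_pos h, Finset.prod_eq_one fun i _ => if_pos (h i)]
      · rw [if_neg h]
        push_neg at h
        obtain ⟨i, hi⟩ := h
        have hi' : ¬ (∀ s, s < n → ((i ∈ T' (s + 1)) ↔ i ∈ T' s ∨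
            ((u i = Protocol.OR ∧ ∃ k, σ i k ∈ T' s) ∨
             (u i = Protocol.AND ∧ ∀ k, σ i k ∈ T' s)))) := by
          push_neg
          exact hi
        symm
        apply Finset.prod_eq_zero (Finset.mem_univ i)
        rw [if_neg hi']
    simp_rw [hprodite, ← Finset.prod_mul_distrib]
    exact Fintype.prod_sum fun (i : Fin n) (e : Fin m → Fin n) => (∏ k, w k i (e k)) *
      (if ∀ s, s < n → ((i ∈ T' (s + 1)) ↔ i ∈ T' s ∨
          ((u i = Protocol.OR ∧ ∃ k, e k ∈ T' s) ∨
           (u i = Protocol.AND ∧ ∀ k, e k ∈ T' s))) then 1 else 0)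

end TrajEq
section Main
variable {n m : ℕ} (w : Fin m → Fin n → Fin n → ℝ) (u : Fin n → Protocol)
  (S₀ : Finset (Fin n))

def capT {n : ℕ} (f : Fin (n + 1) → Finset (Fin n)) : ℕ → Finset (Fin n) :=
  fun s => f ⟨min s n, Nat.lt_succ_of_le (min_le_right s n)⟩

lemma capT_le {n : ℕ} (f : Fin (n + 1) → Finset (Fin n)) {s : ℕ} (hs : s ≤ n)
    (h : s < n + 1) : capT f s = f ⟨s, h⟩ :=
  congrArg f (Fin.ext (min_eq_left hs))

lemma reach_set_eq (i : Fin n) :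
    {μ : Fin n → Fin m → ℝ | i ∈ ltmSS w u S₀ μ}
      = ⋃ f ∈ Finset.univ.filter (fun f : Fin (n + 1) → Finset (Fin n) =>
          i ∈ f (Fin.last n)),
        {μ : Fin n → Fin m → ℝ | ∀ s, s ≤ n → (ltmStep w u μ)^[s] S₀ = capT f s} := by
  ext μ
  simp only [Set.mem_setOf_eq, Set.mem_iUnion, Finset.mem_filter, Finset.mem_univ,
    true_and, exists_prop]
  constructor
  · intro hi
    refine ⟨fun t => (ltmStep w u μ)^[t.val] S₀, hi, ?_⟩
    intro s hs
    rw [capT_le _ hs (Nat.lt_succ_of_le hs)]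
  · rintro ⟨f, hfl, hfE⟩
    have := hfE n le_rfl
    rw [capT_le _ le_rfl (Nat.lt_succ_of_le le_rfl)] at this
    have hlast : (⟨n, Nat.lt_succ_of_le le_rfl⟩ : Fin (n + 1)) = Fin.last n := rfl
    rw [hlast] at this
    show i ∈ (ltmStep w u μ)^[n] S₀
    rw [this]
    exact hfl

lemma pLTM_eq_rProb (hw0 : ∀ k i j, 0 ≤ w k i j)
    (hw1 : ∀ k i, ∑ j : Fin n, w k i j = 1) (i : Fin n) :
    pLTM w u S₀ i = rProb w S₀ u i := by
  classical
  set F : Finset (Fin (n + 1) → Finset (Fin n)) :=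
    Finset.univ.filter (fun f => i ∈ f (Fin.last n)) with hF
  have hdisj : (↑F : Set (Fin (n + 1) → Finset (Fin n))).PairwiseDisjoint
      (fun f => {μ : Fin n → Fin m → ℝ | ∀ s, s ≤ n →
        (ltmStep w u μ)^[s] S₀ = capT f s}) := by
    intro f _ g _ hfg
    rw [Function.onFun, Set.disjoint_left]
    intro μ hf hg
    apply hfg
    funext t
    have h1 := hf t.val (Nat.lt_succ_iff.mp t.isLt)
    have h2 := hg t.val (Nat.lt_succ_iff.mp t.isLt)
    rw [capT_le _ (Nat.lt_succ_iff.mp t.isLt) t.isLt] at h1 h2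
    rw [show (⟨t.val, t.isLt⟩ : Fin (n + 1)) = t from Fin.ext rfl] at h1 h2
    rw [← h1, ← h2]
  have hmeasE : ∀ f ∈ F, MeasurableSet {μ : Fin n → Fin m → ℝ | ∀ s, s ≤ n →
      (ltmStep w u μ)^[s] S₀ = capT f s} := fun f _ => event_meas w u S₀ (capT f)
  have hsum := measure_biUnion_finset (μ := thMeasure n m) hdisj hmeasE
  rw [pLTM, reach_set_eq w u S₀ i, ← hF, hsum]
  have htraj : ∀ f : Fin (n + 1) → Finset (Fin n),
      thMeasure n m {μ : Fin n → Fin m → ℝ | ∀ s, s ≤ n →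
        (ltmStep w u μ)^[s] S₀ = capT f s}
      = ENNReal.ofReal (∑ σ : Fin n → Fin m → Fin n,
          (∏ a : Fin n, ∏ k : Fin m, w k a (σ a k)) *
          (if ∀ s, s ≤ n → (lemStep S₀ u σ)^[s] S₀ = capT f s then 1 else 0)) :=
    fun f => traj_eq w u S₀ hw0 hw1 (capT f)
  have hR_nonneg : ∀ f : Fin (n + 1) → Finset (Fin n),
      0 ≤ ∑ σ : Fin n → Fin m → Fin n,
          (∏ a : Fin n, ∏ k : Fin m, w k a (σ a k)) *
          (if ∀ s, s ≤ n → (lemStep S₀ u σ)^[s] S₀ = capT f s then 1 else 0) := by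
    intro f
    refine Finset.sum_nonneg fun σ _ => mul_nonneg ?_ ?_
    · exact Finset.prod_nonneg fun a _ => Finset.prod_nonneg fun k _ => hw0 k a (σ a k)
    · split <;> norm_num
  rw [ENNReal.toReal_sum (fun f _ => by rw [htraj f]; exact ENNReal.ofReal_ne_top)]
  have hterm : ∀ f ∈ F, (thMeasure n m {μ : Fin n → Fin m → ℝ | ∀ s, s ≤ n →
        (ltmStep w u μ)^[s] S₀ = capT f s}).toReal
      = ∑ σ : Fin n → Fin m → Fin n,
          (∏ a : Fin n, ∏ k : Fin m, w k a (σ a k)) *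
          (if ∀ s, s ≤ n → (lemStep S₀ u σ)^[s] S₀ = capT f s then 1 else 0) := by
    intro f _
    rw [htraj f, ENNReal.toReal_ofReal (hR_nonneg f)]
  rw [Finset.sum_congr rfl hterm, Finset.sum_comm]
  rw [rProb]
  refine Finset.sum_congr rfl fun σ _ => ?_
  set f₀ : Fin (n + 1) → Finset (Fin n) := fun t => (lemStep S₀ u σ)^[t.val] S₀ with hf₀
  have hiter : ∀ f : Fin (n + 1) → Finset (Fin n),
      (∀ s, s ≤ n → (lemStep S₀ u σ)^[s] S₀ = capT f s) ↔ f = f₀ := by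
    intro f
    constructor
    · intro h
      funext t
      have h1 := h t.val (Nat.lt_succ_iff.mp t.isLt)
      rw [capT_le _ (Nat.lt_succ_iff.mp t.isLt) t.isLt] at h1
      rw [show (⟨t.val, t.isLt⟩ : Fin (n + 1)) = t from Fin.ext rfl] at h1
      rw [← h1]
    · rintro rfl s hs
      rw [capT_le _ hs (Nat.lt_succ_of_le hs)]
  have hUR : UReachable S₀ u σ i ↔ i ∈ f₀ (Fin.last n) := Iff.rfl
  by_cases hreach : i ∈ f₀ (Fin.last n)
  · rw [Finset.sum_eq_single_of_mem f₀ (by simp [hF, hreach])]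
    · rw [if_pos ((hiter f₀).mpr rfl), mul_one, if_pos (hUR.mpr hreach)]
    · intro f _ hne
      rw [if_neg (fun h => hne ((hiter f).mp h)), mul_zero]
  · rw [Finset.sum_eq_zero, if_neg (fun h => hreach (hUR.mp h))]
    intro f hfF
    have hne : f ≠ f₀ := by
      rintro rfl
      rw [hF, Finset.mem_filter] at hfF
      exact hreach hfF.2
    rw [if_neg (fun h => hne ((hiter f).mp h)), mul_zero]

end Main
/-- the multiplex influence spread (expected size of the steady-state
active set of the LTM) equals the sum over agents of the LEM `U`-reachability
probabilities; in particular, the multiplex cascade centrality of agent `j`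
(`S₀ = {j}`) equals `∑ i, r i`. -/
theorem influence_spread_eq_sum_reach {n m : ℕ} (w : Fin m → Fin n → Fin n → ℝ)
    (hw0 : ∀ k i j, 0 ≤ w k i j) (hw1 : ∀ k i, ∑ j : Fin n, w k i j = 1)
    (u : Fin n → Protocol) (S₀ : Finset (Fin n)) :
    (∫ μ, ((ltmSS w u S₀ μ).card : ℝ) ∂(thMeasure n m) =
      ∑ i : Fin n, rProb w S₀ u i) ∧
    (∀ j : Fin n,
      casCen w u j = ∑ i : Fin n, rProb w {j} u i) := by
  have key : ∀ (S : Finset (Fin n)) (i : Fin n), pLTM w u S i = rProb w S u i :=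
    fun S i => pLTM_eq_rProb w u S hw0 hw1 i
  constructor
  · have hcard : ∀ μ : Fin n → Fin m → ℝ, ((ltmSS w u S₀ μ).card : ℝ)
        = ∑ i : Fin n, if i ∈ ltmSS w u S₀ μ then (1:ℝ) else 0 := by
      intro μ
      rw [Finset.sum_ite_mem, Finset.univ_inter, Finset.sum_const, nsmul_eq_mul, mul_one]
    have hmeas : ∀ i : Fin n, MeasurableSet {μ : Fin n → Fin m → ℝ | i ∈ ltmSS w u S₀ μ} := by
      intro i
      rw [reach_set_eq w u S₀ i]
      exact Finset.measurableSet_biUnion _ fun f _ => event_meas w u S₀ (capT f)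
    have hind : ∀ i : Fin n, (fun μ : Fin n → Fin m → ℝ =>
        if i ∈ ltmSS w u S₀ μ then (1:ℝ) else 0)
        = Set.indicator {μ : Fin n → Fin m → ℝ | i ∈ ltmSS w u S₀ μ} (fun _ => 1) := by
      intro i
      funext μ
      rw [Set.indicator_apply]
      rfl
    have hint : ∀ i : Fin n, Integrable (fun μ : Fin n → Fin m → ℝ =>
        if i ∈ ltmSS w u S₀ μ then (1:ℝ) else 0) (thMeasure n m) := by
      intro i
      rw [hind i]
      exact (integrable_const 1).indicator (hmeas i)
    calc ∫ μ, ((ltmSS w u S₀ μ).card : ℝ) ∂(thMeasure n m)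
        = ∫ μ, (∑ i : Fin n, if i ∈ ltmSS w u S₀ μ then (1:ℝ) else 0) ∂(thMeasure n m) := by
          simp_rw [hcard]
      _ = ∑ i : Fin n, ∫ μ, (if i ∈ ltmSS w u S₀ μ then (1:ℝ) else 0) ∂(thMeasure n m) :=
          integral_finset_sum _ fun i _ => hint i
      _ = ∑ i : Fin n, pLTM w u S₀ i := by
          refine Finset.sum_congr rfl fun i _ => ?_
          rw [hind i, integral_indicator_const _ (hmeas i), smul_eq_mul, mul_one, pLTM, measureReal_def]
      _ = ∑ i : Fin n, rProb w S₀ u i := Finset.sum_congr rfl fun i _ => key S₀ i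
  · intro j
    rw [casCen]
    exact Finset.sum_congr rfl fun i _ => key {j} i
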